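/- In the polynomial ring ℤ[λ₁, λ₂, t], set r₁ = 20λ₁λ₂ + (t² − λ₁t − 44λ₂)(t − 2λ₁), r₂ = 24λ₁² − 48λ₂ + (12t − 48λ₁)(t − 2λ₁), r₃ = 60(λ₁² − 4λ₂)(t − 3λ₁)(t − 2λ₁). Then the ideal (r₁, r₂, r₃, t − 2λ₁) equals the ideal (t − 2λ₁, 24λ₁² − 48λ₂, 20λ₁λ₂); equivalently, the quotient ring ℤ[λ₁, λ₂, t]/(r₁, r₂, r₃, t − 2λ₁) is isomorphic to ℤ[λ₁, λ₂]/(24λ₁² − 48λ₂, 20λ₁λ₂). -/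

import Mathlib

open MvPolynomial

/-- In ℤ[λ₁, λ₂, t] (with λ₁ = X 0, λ₂ = X 1, t = X 2), with r₁, r₂, r₃ as indicated,
the ideal (r₁, r₂, r₃, t − 2λ₁) equals (t − 2λ₁, 24λ₁² − 48λ₂, 20λ₁λ₂); equivalently,
ℤ[λ₁, λ₂, t]/(r₁, r₂, r₃, t − 2λ₁) ≅ ℤ[λ₁, λ₂]/(24λ₁² − 48λ₂, 20λ₁λ₂), the isomorphism
being induced by λ₁ ↦ λ₁, λ₂ ↦ λ₂, t ↦ 2λ₁. -/
theorem stmt10 (r1 r2 r3 : MvPolynomial (Fin 3) ℤ)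
    (hr1 : r1 = 20 * X 0 * X 1 + ((X 2) ^ 2 - X 0 * X 2 - 44 * X 1) * (X 2 - 2 * X 0))
    (hr2 : r2 = 24 * (X 0) ^ 2 - 48 * X 1 + (12 * X 2 - 48 * X 0) * (X 2 - 2 * X 0))
    (hr3 : r3 = 60 * ((X 0) ^ 2 - 4 * X 1) * (X 2 - 3 * X 0) * (X 2 - 2 * X 0)) :
    Ideal.span {r1, r2, r3, X 2 - 2 * X 0} =
      Ideal.span ({X 2 - 2 * X 0, 24 * (X 0) ^ 2 - 48 * X 1, 20 * X 0 * X 1} :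
        Set (MvPolynomial (Fin 3) ℤ)) ∧
    ∃ e : (MvPolynomial (Fin 3) ℤ ⧸ Ideal.span {r1, r2, r3, X 2 - 2 * X 0}) ≃+*
        (MvPolynomial (Fin 2) ℤ ⧸
          Ideal.span ({24 * (X 0) ^ 2 - 48 * X 1, 20 * X 0 * X 1} :
            Set (MvPolynomial (Fin 2) ℤ))),
      ∀ p : MvPolynomial (Fin 3) ℤ,
        e (Ideal.Quotient.mk (Ideal.span {r1, r2, r3, X 2 - 2 * X 0}) p) =
          Ideal.Quotient.mk
            (Ideal.span ({24 * (X 0) ^ 2 - 48 * X 1, 20 * X 0 * X 1} :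
              Set (MvPolynomial (Fin 2) ℤ)))
            (aeval ![X 0, X 1, 2 * X 0] p) := by
  set I := Ideal.span {r1, r2, r3, X 2 - 2 * X 0} with hI
  set I' := Ideal.span ({X 2 - 2 * X 0, 24 * (X 0) ^ 2 - 48 * X 1, 20 * X 0 * X 1} :
      Set (MvPolynomial (Fin 3) ℤ)) with hI'
  set J := Ideal.span ({24 * (X 0) ^ 2 - 48 * X 1, 20 * X 0 * X 1} :
      Set (MvPolynomial (Fin 2) ℤ)) with hJ
  have hTI' : (X 2 - 2 * X 0 : MvPolynomial (Fin 3) ℤ) ∈ I' :=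
    Ideal.subset_span (by simp)
  have h24 : (24 * (X 0) ^ 2 - 48 * X 1 : MvPolynomial (Fin 3) ℤ) ∈ I' :=
    Ideal.subset_span (by simp)
  have h20 : (20 * X 0 * X 1 : MvPolynomial (Fin 3) ℤ) ∈ I' :=
    Ideal.subset_span (by simp)
  have hTI : (X 2 - 2 * X 0 : MvPolynomial (Fin 3) ℤ) ∈ I :=
    Ideal.subset_span (by simp)
  have hspan : I = I' := by
    apply le_antisymm
    · rw [hI, Ideal.span_le]
      rintro p hp
      simp only [Set.mem_insert_iff, Set.mem_singleton_iff] at hp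
      rcases hp with h | h | h | h <;> subst h
      · rw [hr1]
        exact Ideal.add_mem _ h20 (Ideal.mul_mem_left _ _ hTI')
      · rw [hr2]
        exact Ideal.add_mem _ h24 (Ideal.mul_mem_left _ _ hTI')
      · rw [hr3]
        exact Ideal.mul_mem_left _ _ hTI'
      · exact hTI'
    · rw [hI', Ideal.span_le]
      rintro p hp
      simp only [Set.mem_insert_iff, Set.mem_singleton_iff] at hp
      have hr1' : r1 ∈ I := Ideal.subset_span (by simp)
      have hr2' : r2 ∈ I := Ideal.subset_span (by simp)
      rcases hp with h | h | h <;> subst h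
      · exact hTI
      · have := Ideal.sub_mem _ hr2' (Ideal.mul_mem_left _ (12 * X 2 - 48 * X 0) hTI)
        rw [hr2] at this; simpa using this
      · have := Ideal.sub_mem _ hr1'
          (Ideal.mul_mem_left _ ((X 2) ^ 2 - X 0 * X 2 - 44 * X 1) hTI)
        rw [hr1] at this; simpa using this
  refine ⟨hspan, ?_⟩
  let v : Fin 3 → MvPolynomial (Fin 2) ℤ := ![X 0, X 1, 2 * X 0]
  let w : Fin 2 → MvPolynomial (Fin 3) ℤ := ![X 0, X 1]
  have e1 : aeval v (X 2 - 2 * X 0 : MvPolynomial (Fin 3) ℤ) = 0 := by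
    simp [v, map_ofNat]
  have e2 : aeval v (24 * (X 0) ^ 2 - 48 * X 1 : MvPolynomial (Fin 3) ℤ)
      = 24 * (X 0) ^ 2 - 48 * X 1 := by
    simp [v, map_ofNat]
  have e3 : aeval v (20 * X 0 * X 1 : MvPolynomial (Fin 3) ℤ) = 20 * X 0 * X 1 := by
    simp [v, map_ofNat]
  have w2 : aeval w (24 * (X 0) ^ 2 - 48 * X 1 : MvPolynomial (Fin 2) ℤ)
      = 24 * (X 0) ^ 2 - 48 * X 1 := by
    simp [w, map_ofNat]
  have w3 : aeval w (20 * X 0 * X 1 : MvPolynomial (Fin 2) ℤ) = 20 * X 0 * X 1 := by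
    simp [w, map_ofNat]
  let f : MvPolynomial (Fin 3) ℤ →ₐ[ℤ] MvPolynomial (Fin 2) ℤ ⧸ J :=
    (Ideal.Quotient.mkₐ ℤ J).comp (aeval v)
  let g : MvPolynomial (Fin 2) ℤ →ₐ[ℤ] MvPolynomial (Fin 3) ℤ ⧸ I' :=
    (Ideal.Quotient.mkₐ ℤ I').comp (aeval w)
  have hf : ∀ a ∈ I', f a = 0 := by
    intro a ha
    have hle : I' ≤ RingHom.ker f.toRingHom := by
      rw [hI', Ideal.span_le]
      rintro p hp
      simp only [Set.mem_insert_iff, Set.mem_singleton_iff] at hp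
      have key : ∀ q : MvPolynomial (Fin 3) ℤ, aeval v q ∈ J →
          p = q → p ∈ RingHom.ker f.toRingHom := by
        rintro q hq rfl
        refine RingHom.mem_ker.mpr ?_
        show Ideal.Quotient.mk J (aeval v p) = 0
        exact Ideal.Quotient.eq_zero_iff_mem.mpr hq
      rcases hp with h | h | h
      · exact key _ (by rw [e1]; exact J.zero_mem) h
      · exact key _ (by rw [e2]; exact Ideal.subset_span (by simp)) h
      · exact key _ (by rw [e3]; exact Ideal.subset_span (by simp)) h
    exact hle ha
  have hg : ∀ a ∈ J, g a = 0 := by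
    intro a ha
    have hle : J ≤ RingHom.ker g.toRingHom := by
      rw [hJ, Ideal.span_le]
      rintro p hp
      simp only [Set.mem_insert_iff, Set.mem_singleton_iff] at hp
      have key : ∀ q : MvPolynomial (Fin 2) ℤ, aeval w q ∈ I' →
          p = q → p ∈ RingHom.ker g.toRingHom := by
        rintro q hq rfl
        refine RingHom.mem_ker.mpr ?_
        show Ideal.Quotient.mk I' (aeval w p) = 0
        exact Ideal.Quotient.eq_zero_iff_mem.mpr hq
      rcases hp with h | h
      · exact key _ (by rw [w2]; exact h24) h
      · exact key _ (by rw [w3]; exact h20) h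
    exact hle ha
  let F : (MvPolynomial (Fin 3) ℤ ⧸ I') →ₐ[ℤ] MvPolynomial (Fin 2) ℤ ⧸ J :=
    Ideal.Quotient.liftₐ I' f hf
  let G : (MvPolynomial (Fin 2) ℤ ⧸ J) →ₐ[ℤ] MvPolynomial (Fin 3) ℤ ⧸ I' :=
    Ideal.Quotient.liftₐ J g hg
  have hFmk : ∀ p, F (Ideal.Quotient.mk I' p) = Ideal.Quotient.mk J (aeval v p) := by
    intro p
    simp [F, f, Ideal.Quotient.liftₐ_apply]
    rfl
  have hGmk : ∀ p, G (Ideal.Quotient.mk J p) = Ideal.Quotient.mk I' (aeval w p) := by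
    intro p
    simp [G, g, Ideal.Quotient.liftₐ_apply]
    rfl
  have key3 : ∀ i : Fin 3,
      Ideal.Quotient.mk I' (aeval (R := ℤ) w (aeval (R := ℤ) v (X i))) = Ideal.Quotient.mk I' (X i) := by
    intro i
    rw [Ideal.Quotient.eq]
    fin_cases i
    · convert I'.zero_mem using 1; simp [v, w]
    · convert I'.zero_mem using 1; simp [v, w]
    · convert I'.neg_mem hTI' using 1; simp [v, w, map_ofNat]
  have key2 : ∀ i : Fin 2,
      Ideal.Quotient.mk J (aeval (R := ℤ) v (aeval (R := ℤ) w (X i))) = Ideal.Quotient.mk J (X i) := by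
    intro i
    fin_cases i <;> simp [v, w]
  have hFG : F.comp G = AlgHom.id ℤ _ := by
    apply Ideal.Quotient.algHom_ext
    apply MvPolynomial.algHom_ext
    intro i
    simp only [AlgHom.comp_apply, Ideal.Quotient.mkₐ_eq_mk, AlgHom.id_apply]
    rw [hGmk, hFmk]
    exact key2 i
  have hGF : G.comp F = AlgHom.id ℤ _ := by
    apply Ideal.Quotient.algHom_ext
    apply MvPolynomial.algHom_ext
    intro i
    simp only [AlgHom.comp_apply, Ideal.Quotient.mkₐ_eq_mk, AlgHom.id_apply]
    rw [hFmk, hGmk]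
    exact key3 i
  let E : (MvPolynomial (Fin 3) ℤ ⧸ I') ≃+* MvPolynomial (Fin 2) ℤ ⧸ J :=
    (AlgEquiv.ofAlgHom F G hFG hGF).toRingEquiv
  refine ⟨(Ideal.quotEquivOfEq hspan).trans E, fun p => ?_⟩
  simp only [RingEquiv.trans_apply, Ideal.quotEquivOfEq_mk]
  exact hFmk p
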